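/- Let ψ : X → H be weakly measurable and suppose (ψ,ψ) is a reproducing pair. Then ψ is a continuous frame, i.e. there exist constants 0 < m ≤ M < ∞ such that m‖f‖² ≤ ∫_X |⟨f,ψ(x)⟩|² dμ(x) ≤ M‖f‖² for all f ∈ H, and V_ψ(X,μ) is (identified with) a closed subspace of L²(X,dμ). -/

import Mathlib

open MeasureTheory Filter Topology
open scoped Classical ENNReal NNReal

noncomputable section

variable {H : Type*} [NormedAddCommGroup H] [InnerProductSpace ℂ H] [CompleteSpace H]
  [TopologicalSpace.SeparableSpace H]
variable {X : Type*} [TopologicalSpace X] [LocallyCompactSpace X] [MeasurableSpace X]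
  [BorelSpace X]

/-- Notation for the Mathlib inner product (conjugate-linear in the first slot);
the paper's inner product `⟨f, g⟩` (linear in the first slot) is `⟪g, f⟫`. -/
local notation "⟪" x ", " y "⟫" => @inner ℂ _ _ x y

/-- `φ : X → H` is weakly measurable: `x ↦ ⟨f, φ x⟩` is measurable for every `f ∈ H`. -/
def WeaklyMeasurable (φ : X → H) : Prop :=
  ∀ f : H, Measurable fun x => ⟪φ x, f⟫

/-- `ξ ∈ 𝒱_φ(X,μ)`: `ξ` is measurable, the integral `∫ ξ(x) ⟨φ(x), g⟩ dμ(x)` exists for all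
`g ∈ H`, and it defines a bounded conjugate-linear functional of `g`. -/
def MemV (μ : Measure X) (φ : X → H) (ξ : X → ℂ) : Prop :=
  Measurable ξ ∧ (∀ g : H, Integrable (fun x => ξ x * ⟪g, φ x⟫) μ) ∧
    ∃ c : ℝ, ∀ g : H, ‖∫ x, ξ x * ⟪g, φ x⟫ ∂μ‖ ≤ c * ‖g‖

/-- The map `T_φ : 𝒱_φ(X,μ) → H`, determined weakly by
`⟨T_φ ξ, g⟩ = ∫ ξ(x) ⟨φ(x), g⟩ dμ(x)` for all `g ∈ H` (junk value `0` off `𝒱_φ`). -/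
def Tmap (μ : Measure X) (φ : X → H) (ξ : X → ℂ) : H :=
  if h : MemV μ φ ξ then
    have key : ∀ g : H, Integrable (fun x => (starRingEnd ℂ) (ξ x) * ⟪φ x, g⟫) μ := by
      intro g
      have h2 : Integrable (fun x => (RCLike.conjLIE : ℂ ≃ₗᵢ[ℝ] ℂ) (ξ x * ⟪g, φ x⟫)) μ :=
        ((RCLike.conjLIE : ℂ ≃ₗᵢ[ℝ] ℂ).integrable_comp_iff).2 (h.2.1 g)
      simpa [RCLike.conjLIE_apply, map_mul] using h2
    (InnerProductSpace.toDual ℂ H).symm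
      (LinearMap.mkContinuousOfExistsBound
        { toFun := fun g => ∫ x, (starRingEnd ℂ) (ξ x) * ⟪φ x, g⟫ ∂μ
          map_add' := fun g g' => by
            simp only [inner_add_right, mul_add]
            exact integral_add (key g) (key g')
          map_smul' := fun c g => by
            simp only [inner_smul_right, RingHom.id_apply]
            calc ∫ x, (starRingEnd ℂ) (ξ x) * (c * ⟪φ x, g⟫) ∂μ
                = ∫ x, c * ((starRingEnd ℂ) (ξ x) * ⟪φ x, g⟫) ∂μ := by
                  simp only [mul_left_comm]
              _ = c * ∫ x, (starRingEnd ℂ) (ξ x) * ⟪φ x, g⟫ ∂μ := integral_const_mul _ _ }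
        (by
          obtain ⟨c, hc⟩ := h.2.2
          refine ⟨c, fun g => ?_⟩
          have he : ∫ x, (starRingEnd ℂ) (ξ x) * ⟪φ x, g⟫ ∂μ
              = (starRingEnd ℂ) (∫ x, ξ x * ⟪g, φ x⟫ ∂μ) := by
            rw [← integral_conj]
            congr 1; funext x
            simp [map_mul]
          simp only [LinearMap.coe_mk, AddHom.coe_mk]
          rw [he, RCLike.norm_conj]
          exact hc g))
  else 0

/-- The norm `‖[ξ]_φ‖_φ = sup_{‖g‖ ≤ 1} |∫ ξ(x) ⟨φ(x), g⟩ dμ(x)|` (computed on a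
representative; it only depends on the class `[ξ]_φ = ξ + Ker T_φ`). -/
def Vnorm (μ : Measure X) (φ : X → H) (ξ : X → ℂ) : ℝ :=
  ⨆ g : {g : H // ‖g‖ ≤ 1}, ‖∫ x, ξ x * ⟪(g : H), φ x⟫ ∂μ‖

/-- The range of `T̂_φ : V_φ(X,μ) → H` (equivalently, of `T_φ` on `𝒱_φ(X,μ)`). -/
def Tran (μ : Measure X) (φ : X → H) : Set H := Tmap μ φ '' {ξ | MemV μ φ ξ}

/-- The analysis coefficient map: `(C_ψ f)(x) = ⟨f, ψ(x)⟩`. -/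
def Cpsi (ψ : X → H) (f : H) : X → ℂ := fun x => ⟪ψ x, f⟫

/-- `φ` is `μ`-total: `Ker C_φ = {0}`, i.e. if `∫ ξ(x) ⟨φ(x), f⟩ dμ(x) = 0` for every
`ξ ∈ 𝒱_φ(X,μ)`, then `f = 0`. -/
def MuTotal (μ : Measure X) (φ : X → H) : Prop :=
  ∀ f : H, (∀ ξ, MemV μ φ ξ → ∫ x, ξ x * ⟪f, φ x⟫ ∂μ = 0) → f = 0

/-- `S : H ≃L[ℂ] H` represents the sesquilinear form `Ω_{ψ,φ}`:
`⟨S f, g⟩ = ∫ ⟨f, ψ(x)⟩ ⟨φ(x), g⟩ dμ(x)` for all `f, g ∈ H`. -/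
def IsAnalysisOp (μ : Measure X) (ψ φ : X → H) (S : H ≃L[ℂ] H) : Prop :=
  ∀ f g : H, ⟪g, S f⟫ = ∫ x, ⟪ψ x, f⟫ * ⟪g, φ x⟫ ∂μ

/-- `(ψ, φ)` is a reproducing pair: both weakly measurable, the form
`Ω_{ψ,φ}(f,g) = ∫ ⟨f,ψ(x)⟩⟨φ(x),g⟩ dμ(x)` is well defined (integrable) and bounded, and the
associated bounded operator `S_{ψ,φ}` has a bounded everywhere-defined inverse. -/
def IsReproducingPair (μ : Measure X) (ψ φ : X → H) : Prop :=
  WeaklyMeasurable ψ ∧ WeaklyMeasurable φ ∧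
    (∀ f g : H, Integrable (fun x => ⟪ψ x, f⟫ * ⟪g, φ x⟫) μ) ∧
    ∃ S : H ≃L[ℂ] H, IsAnalysisOp μ ψ φ S

/-- Completeness of `V_φ(X,μ)` in the norm `‖·‖_φ`, phrased via representatives:
every `‖·‖_φ`-Cauchy sequence of elements of `𝒱_φ(X,μ)` converges in `‖·‖_φ`
to an element of `𝒱_φ(X,μ)`. -/
def VComplete (μ : Measure X) (φ : X → H) : Prop :=
  ∀ ξ : ℕ → X → ℂ, (∀ n, MemV μ φ (ξ n)) →
    (∀ ε : ℝ, 0 < ε → ∃ N, ∀ m ≥ N, ∀ n ≥ N, Vnorm μ φ (ξ m - ξ n) < ε) →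
    ∃ η, MemV μ φ η ∧ Tendsto (fun n => Vnorm μ φ (ξ n - η)) atTop (𝓝 0)

/-- `F` is (induced by) a bounded linear functional on `V_φ(X,μ)`: it is linear on `𝒱_φ(X,μ)`,
constant on the classes of `V_φ(X,μ) = 𝒱_φ(X,μ)/Ker T_φ`, and bounded for `‖·‖_φ`. -/
def IsBddLinearFunctional (μ : Measure X) (φ : X → H) (F : (X → ℂ) → ℂ) : Prop :=
  (∀ ξ η, MemV μ φ ξ → MemV μ φ η → F (ξ + η) = F ξ + F η) ∧
  (∀ (c : ℂ) ξ, MemV μ φ ξ → F (c • ξ) = c * F ξ) ∧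
  (∀ ξ η, MemV μ φ ξ → MemV μ φ η → Tmap μ φ (ξ - η) = 0 → F ξ = F η) ∧
  ∃ c : ℝ, ∀ ξ, MemV μ φ ξ → ‖F ξ‖ ≤ c * Vnorm μ φ ξ

/-- The dual norm `‖F‖_{φ*} = sup_{‖[ξ]_φ‖_φ ≤ 1} |F([ξ]_φ)|`. -/
def DualNorm (μ : Measure X) (φ : X → H) (F : (X → ℂ) → ℂ) : ℝ :=
  ⨆ ξ : {ξ : X → ℂ // MemV μ φ ξ ∧ Vnorm μ φ ξ ≤ 1}, ‖F ξ.1‖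

/-- `V_φ(X,μ)` and `V_ψ(X,μ)` are conjugate dual to each other with respect to the pairing
`⟨⟨ξ, η⟩⟩ = ∫ ξ(x) conj(η(x)) dμ(x)`: the pairing is well defined, each class `[η]_ψ` gives a
bounded linear functional on `V_φ(X,μ)`, and `[η]_ψ ↦ ⟨⟨·, η⟩⟩` is a bijection from `V_ψ(X,μ)`
onto the dual of `V_φ(X,μ)`. -/
def ConjDual (μ : Measure X) (φ ψ : X → H) : Prop :=
  (∀ ξ η, MemV μ φ ξ → MemV μ ψ η →
      Integrable (fun x => ξ x * (starRingEnd ℂ) (η x)) μ) ∧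
  (∀ η, MemV μ ψ η →
      IsBddLinearFunctional μ φ (fun ξ => ∫ x, ξ x * (starRingEnd ℂ) (η x) ∂μ)) ∧
  (∀ η η', MemV μ ψ η → MemV μ ψ η' →
      (∀ ξ, MemV μ φ ξ →
        ∫ x, ξ x * (starRingEnd ℂ) (η x) ∂μ = ∫ x, ξ x * (starRingEnd ℂ) (η' x) ∂μ) →
      Tmap μ ψ (η - η') = 0) ∧
  (∀ F, IsBddLinearFunctional μ φ F →
      ∃ η, MemV μ ψ η ∧ ∀ ξ, MemV μ φ ξ → F ξ = ∫ x, ξ x * (starRingEnd ℂ) (η x) ∂μ)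

lemma MemV.integrable_conj {μ : Measure X} {φ : X → H} {ξ : X → ℂ} (hξ : MemV μ φ ξ) (g : H) :
    Integrable (fun x => (starRingEnd ℂ) (ξ x) * ⟪φ x, g⟫) μ := by
  have h2 : Integrable (fun x => (RCLike.conjLIE : ℂ ≃ₗᵢ[ℝ] ℂ) (ξ x * ⟪g, φ x⟫)) μ :=
    ((RCLike.conjLIE : ℂ ≃ₗᵢ[ℝ] ℂ).integrable_comp_iff).2 (hξ.2.1 g)
  simpa [RCLike.conjLIE_apply, map_mul] using h2

lemma inner_Tmap (μ : Measure X) (φ : X → H) {ξ : X → ℂ} (hξ : MemV μ φ ξ) (g : H) :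
    ⟪Tmap μ φ ξ, g⟫ = ∫ x, (starRingEnd ℂ) (ξ x) * ⟪φ x, g⟫ ∂μ := by
  rw [Tmap, dif_pos hξ, InnerProductSpace.toDual_symm_apply]
  rfl

lemma MemV.sub {μ : Measure X} {φ : X → H} {ξ η : X → ℂ} (hξ : MemV μ φ ξ)
    (hη : MemV μ φ η) : MemV μ φ (ξ - η) := by
  obtain ⟨c, hc⟩ := hξ.2.2
  obtain ⟨c', hc'⟩ := hη.2.2
  refine ⟨hξ.1.sub hη.1, fun g => ?_, ⟨c + c', fun g => ?_⟩⟩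
  · have := (hξ.2.1 g).sub (hη.2.1 g)
    exact this.congr (Filter.Eventually.of_forall fun x => by simp [sub_mul])
  · have he : ∫ x, (ξ - η) x * ⟪g, φ x⟫ ∂μ
        = (∫ x, ξ x * ⟪g, φ x⟫ ∂μ) - ∫ x, η x * ⟪g, φ x⟫ ∂μ := by
      rw [← integral_sub (hξ.2.1 g) (hη.2.1 g)]
      congr 1; funext x; simp [sub_mul]
    rw [he]
    calc ‖(∫ x, ξ x * ⟪g, φ x⟫ ∂μ) - ∫ x, η x * ⟪g, φ x⟫ ∂μ‖
        ≤ ‖∫ x, ξ x * ⟪g, φ x⟫ ∂μ‖ + ‖∫ x, η x * ⟪g, φ x⟫ ∂μ‖ := norm_sub_le _ _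
      _ ≤ c * ‖g‖ + c' * ‖g‖ := add_le_add (hc g) (hc' g)
      _ = (c + c') * ‖g‖ := by ring

lemma Tmap_sub (μ : Measure X) (φ : X → H) {ξ η : X → ℂ} (hξ : MemV μ φ ξ)
    (hη : MemV μ φ η) : Tmap μ φ (ξ - η) = Tmap μ φ ξ - Tmap μ φ η := by
  apply ext_inner_right ℂ
  intro g
  rw [inner_sub_left, inner_Tmap μ φ (hξ.sub hη) g, inner_Tmap μ φ hξ g,
    inner_Tmap μ φ hη g, ← integral_sub (hξ.integrable_conj g) (hη.integrable_conj g)]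
  congr 1; funext x; simp [sub_mul]

set_option linter.unusedSectionVars false

set_option maxHeartbeats 1000000 in
/-- Let `ψ` be weakly measurable with `(ψ,ψ)` a reproducing pair. Then `ψ`
is a continuous frame (`m‖f‖² ≤ ∫ |⟨f,ψ(x)⟩|² dμ(x) ≤ M‖f‖²`), and `V_ψ(X,μ)` is identified
with a closed subspace of `L²(X,dμ)`: every class has a representative `⟨f,ψ(·)⟩ ∈ L²`, and
the corresponding subspace of `L²(X,dμ)` is closed. -/
theorem statement13 (μ : Measure X) [μ.Regular] (ψ : X → H)
    (h : IsReproducingPair μ ψ ψ) :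
    (∃ m M : ℝ, 0 < m ∧ ∀ f : H,
        Integrable (fun x => ‖⟪ψ x, f⟫‖ ^ 2) μ ∧
        m * ‖f‖ ^ 2 ≤ ∫ x, ‖⟪ψ x, f⟫‖ ^ 2 ∂μ ∧
        ∫ x, ‖⟪ψ x, f⟫‖ ^ 2 ∂μ ≤ M * ‖f‖ ^ 2) ∧
    (∀ ξ, MemV μ ψ ξ → ∃ f : H,
        MemLp (Cpsi ψ f) 2 μ ∧ Tmap μ ψ (Cpsi ψ f - ξ) = 0) ∧
    IsClosed {F : Lp ℂ 2 μ | ∃ f : H, Cpsi ψ f =ᵐ[μ] ⇑F} := by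
  obtain ⟨hwm, -, hint, S, hS⟩ := h
  -- pointwise identity
  have hpt : ∀ (f : H) (x : X), ⟪ψ x, f⟫ * ⟪f, ψ x⟫ = ((‖⟪ψ x, f⟫‖ ^ 2 : ℝ) : ℂ) := by
    intro f x
    rw [← inner_conj_symm f (ψ x), RCLike.mul_conj]
    norm_cast
  -- integrability of the square
  have hIntR : ∀ f : H, Integrable (fun x => ‖⟪ψ x, f⟫‖ ^ 2) μ := by
    intro f
    have h2 := (hint f f).re
    have h3 : (fun x => RCLike.re (⟪ψ x, f⟫ * ⟪f, ψ x⟫)) = fun x => ‖⟪ψ x, f⟫‖ ^ 2 := by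
      funext x
      rw [hpt f x, RCLike.re_to_complex, Complex.ofReal_re]
    rwa [h3] at h2
  -- the basic identity ⟪f, S f⟫ = ∫ ‖⟪ψ x, f⟫‖²
  have hB : ∀ f : H, ⟪f, S f⟫ = ((∫ x, ‖⟪ψ x, f⟫‖ ^ 2 ∂μ : ℝ) : ℂ) := by
    intro f
    rw [hS f f]
    have h1 : ∫ x, ⟪ψ x, f⟫ * ⟪f, ψ x⟫ ∂μ = ∫ x, ((‖⟪ψ x, f⟫‖ ^ 2 : ℝ) : ℂ) ∂μ :=
      integral_congr_ae (Filter.Eventually.of_forall fun x => hpt f x)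
    rw [h1]
    exact integral_ofReal
  have hBre : ∀ f : H, ∫ x, ‖⟪ψ x, f⟫‖ ^ 2 ∂μ = (⟪f, S f⟫).re := by
    intro f; rw [hB f, Complex.ofReal_re]
  -- membership in L²
  have hmem : ∀ f : H, MemLp (Cpsi ψ f) 2 μ := fun f =>
    (memLp_two_iff_integrable_sq_norm (hwm f).aestronglyMeasurable).2 (hIntR f)
  -- the analysis operator into L²
  set Φ : H → Lp ℂ 2 μ := fun f => (hmem f).toLp (Cpsi ψ f) with hΦ
  have hΦfn : ∀ f : H, ⇑(Φ f) =ᵐ[μ] Cpsi ψ f := fun f => (hmem f).coeFn_toLp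
  have hinner : ∀ f g : H, ⟪Φ g, Φ f⟫ = ⟪g, S f⟫ := by
    intro f g
    rw [hS f g, MeasureTheory.L2.inner_def]
    apply integral_congr_ae
    filter_upwards [hΦfn f, hΦfn g] with x h1 h2
    rw [h1, h2]
    simp only [RCLike.inner_apply, Cpsi]
    rw [inner_conj_symm]
  have hnorm : ∀ f : H, ‖Φ f‖ ^ 2 = ∫ x, ‖⟪ψ x, f⟫‖ ^ 2 ∂μ := by
    intro f
    rw [norm_sq_eq_re_inner (𝕜 := ℂ), hinner f f, RCLike.re_to_complex]
    exact (hBre f).symm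
  -- upper frame bound
  set A : ℝ := ‖(S : H →L[ℂ] H)‖ + 1 with hA
  have hApos : 0 < A := by positivity
  have hupper : ∀ f : H, ∫ x, ‖⟪ψ x, f⟫‖ ^ 2 ∂μ ≤ A * ‖f‖ ^ 2 := by
    intro f
    rw [hBre f]
    calc (⟪f, S f⟫).re ≤ ‖⟪f, S f⟫‖ := by
          rw [← RCLike.re_to_complex]; exact RCLike.re_le_norm _
      _ ≤ ‖f‖ * ‖S f‖ := norm_inner_le_norm _ _
      _ ≤ ‖f‖ * (‖(S : H →L[ℂ] H)‖ * ‖f‖) :=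
          mul_le_mul_of_nonneg_left ((S : H →L[ℂ] H).le_opNorm f) (norm_nonneg f)
      _ ≤ A * ‖f‖ ^ 2 := by nlinarith [norm_nonneg f, sq_nonneg ‖f‖]
  have hΦle : ∀ f : H, ‖Φ f‖ ≤ Real.sqrt A * ‖f‖ := by
    intro f
    have h1 : ‖Φ f‖ ^ 2 ≤ (Real.sqrt A * ‖f‖) ^ 2 := by
      rw [hnorm f, mul_pow, Real.sq_sqrt hApos.le]
      exact hupper f
    have h2 := Real.sqrt_le_sqrt h1
    rwa [Real.sqrt_sq (norm_nonneg _), Real.sqrt_sq (by positivity)] at h2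
  -- lower bound: ‖S f‖ ≤ √A * ‖Φ f‖
  have hSle : ∀ f : H, ‖S f‖ ≤ Real.sqrt A * ‖Φ f‖ := by
    intro f
    rcases eq_or_lt_of_le (norm_nonneg (S f)) with h0 | h0
    · rw [← h0]; positivity
    · have h1 : ‖S f‖ * ‖S f‖ ≤ (Real.sqrt A * ‖Φ f‖) * ‖S f‖ := by
        calc ‖S f‖ * ‖S f‖ = RCLike.re ⟪S f, S f⟫ := by
              rw [← norm_sq_eq_re_inner (𝕜 := ℂ)]; ring
          _ ≤ ‖⟪Φ (S f), Φ f⟫‖ := by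
              rw [hinner f (S f)]; exact RCLike.re_le_norm _
          _ ≤ ‖Φ (S f)‖ * ‖Φ f‖ := norm_inner_le_norm _ _
          _ ≤ (Real.sqrt A * ‖S f‖) * ‖Φ f‖ :=
              mul_le_mul_of_nonneg_right (hΦle (S f)) (norm_nonneg _)
          _ = (Real.sqrt A * ‖Φ f‖) * ‖S f‖ := by ring
      exact le_of_mul_le_mul_right h1 h0
  set c : ℝ := ‖(S.symm : H →L[ℂ] H)‖ + 1 with hc
  have hcpos : 0 < c := by positivity
  have hfle : ∀ f : H, ‖f‖ ≤ c * ‖S f‖ := by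
    intro f
    have h1 : ‖S.symm (S f)‖ ≤ ‖(S.symm : H →L[ℂ] H)‖ * ‖S f‖ :=
      (S.symm : H →L[ℂ] H).le_opNorm (S f)
    rw [S.symm_apply_apply] at h1
    nlinarith [norm_nonneg (S f)]
  have hanti : ∀ f : H, ‖f‖ ≤ (c * Real.sqrt A) * ‖Φ f‖ := by
    intro f
    calc ‖f‖ ≤ c * ‖S f‖ := hfle f
      _ ≤ c * (Real.sqrt A * ‖Φ f‖) := mul_le_mul_of_nonneg_left (hSle f) hcpos.le
      _ = (c * Real.sqrt A) * ‖Φ f‖ := by ring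
  have hsqrtApos : 0 < Real.sqrt A := Real.sqrt_pos.2 hApos
  have hlower : ∀ f : H, ((c * Real.sqrt A) ^ 2)⁻¹ * ‖f‖ ^ 2 ≤ ∫ x, ‖⟪ψ x, f⟫‖ ^ 2 ∂μ := by
    intro f
    have h1 : ‖f‖ ^ 2 ≤ (c * Real.sqrt A) ^ 2 * ‖Φ f‖ ^ 2 := by
      have := hanti f
      nlinarith [norm_nonneg f, norm_nonneg (Φ f), mul_pos hcpos hsqrtApos]
    rw [← hnorm f, inv_mul_le_iff₀ (by positivity)]
    linarith [h1]
  refine ⟨⟨((c * Real.sqrt A) ^ 2)⁻¹, A, by positivity,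
    fun f => ⟨hIntR f, hlower f, hupper f⟩⟩, ?_, ?_⟩
  · -- part 2
    have hCmem : ∀ f : H, MemV μ ψ (Cpsi ψ f) := by
      intro f
      refine ⟨hwm f, fun g => hint f g, ⟨‖(S : H →L[ℂ] H)‖ * ‖f‖, fun g => ?_⟩⟩
      have he : ∫ x, Cpsi ψ f x * ⟪g, ψ x⟫ ∂μ = ⟪g, S f⟫ := (hS f g).symm
      rw [he]
      calc ‖⟪g, S f⟫‖ ≤ ‖g‖ * ‖S f‖ := norm_inner_le_norm _ _
        _ ≤ ‖g‖ * (‖(S : H →L[ℂ] H)‖ * ‖f‖) :=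
            mul_le_mul_of_nonneg_left ((S : H →L[ℂ] H).le_opNorm f) (norm_nonneg g)
        _ = ‖(S : H →L[ℂ] H)‖ * ‖f‖ * ‖g‖ := by ring
    have hTC : ∀ f : H, Tmap μ ψ (Cpsi ψ f) = S f := by
      intro f
      apply ext_inner_right ℂ
      intro g
      rw [inner_Tmap μ ψ (hCmem f) g]
      calc ∫ x, (starRingEnd ℂ) (Cpsi ψ f x) * ⟪ψ x, g⟫ ∂μ
          = (starRingEnd ℂ) (∫ x, ⟪ψ x, f⟫ * ⟪g, ψ x⟫ ∂μ) := by
            rw [← integral_conj]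
            congr 1; funext x
            simp [Cpsi, map_mul]
        _ = (starRingEnd ℂ) ⟪g, S f⟫ := by rw [hS f g]
        _ = ⟪S f, g⟫ := inner_conj_symm _ _
    intro ξ hξ
    refine ⟨S.symm (Tmap μ ψ ξ), hmem _, ?_⟩
    rw [Tmap_sub μ ψ (hCmem _) hξ, hTC, S.apply_symm_apply, sub_self]
  · -- part 3
    have hset : {F : Lp ℂ 2 μ | ∃ f : H, Cpsi ψ f =ᵐ[μ] ⇑F} = Set.range Φ := by
      ext F
      constructor
      · rintro ⟨f, hf⟩
        exact ⟨f, (MeasureTheory.Lp.ext ((hΦfn f).trans hf) : Φ f = F)⟩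
      · rintro ⟨f, rfl⟩
        exact ⟨f, (hΦfn f).symm⟩
    rw [hset]
    have hadd : ∀ f g : H, Φ (f + g) = Φ f + Φ g := by
      intro f g
      apply MeasureTheory.Lp.ext
      filter_upwards [hΦfn (f + g), hΦfn f, hΦfn g,
        MeasureTheory.Lp.coeFn_add (Φ f) (Φ g)] with x h1 h2 h3 h4
      rw [h1, h4, Pi.add_apply, h2, h3]
      simp [Cpsi, inner_add_right]
    have hsmul : ∀ (a : ℂ) (f : H), Φ (a • f) = a • Φ f := by
      intro a f
      apply MeasureTheory.Lp.ext
      filter_upwards [hΦfn (a • f), hΦfn f,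
        MeasureTheory.Lp.coeFn_smul a (Φ f)] with x h1 h2 h3
      rw [h1, h3, Pi.smul_apply, h2]
      simp [Cpsi, inner_smul_right]
    set Φl : H →ₗ[ℂ] Lp ℂ 2 μ :=
      { toFun := Φ, map_add' := hadd, map_smul' := hsmul } with hΦl
    set Φc : H →L[ℂ] Lp ℂ 2 μ :=
      Φl.mkContinuous (Real.sqrt A) (fun f => by
        exact (hΦle f).trans_eq (by ring)) with hΦc
    have hAL : AntilipschitzWith ((c * Real.sqrt A).toNNReal) Φc := by
      apply Φc.antilipschitz_of_bound
      intro f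
      rw [Real.coe_toNNReal _ (by positivity)]
      exact hanti f
    have hrange : Set.range Φ = Set.range Φc := rfl
    rw [hrange]
    exact hAL.isClosed_range Φc.uniformContinuous
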